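/- The chromatic number of the Cartesian product of two simple graphs G and H equals the maximum of the chromatic numbers of G and H. -/

import Mathlib

open SimpleGraph

lemma boxProd_colorable_aux {α β : Type*} (G : SimpleGraph α) (H : SimpleGraph β)
    {n : ℕ} [NeZero n] (hG : G.Colorable n) (hH : H.Colorable n) :
    (G □ H).Colorable n := by
  have fG : G.Coloring (ZMod n) := hG.toColoring (by simp [ZMod.card])
  have fH : H.Coloring (ZMod n) := hH.toColoring (by simp [ZMod.card])
  have C : (G □ H).Coloring (ZMod n) := Coloring.mk (fun x => fG x.1 + fH x.2) (by
    rintro ⟨a, b⟩ ⟨a', b'⟩ (⟨h, rfl⟩ | ⟨h, rfl⟩) <;> simp only []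
    · exact fun hc => fG.valid h (by exact add_right_cancel hc)
    · exact fun hc => fH.valid h (by exact add_left_cancel hc))
  simpa [ZMod.card] using C.colorable

theorem chromaticNumber_boxProd {α β : Type*} [Fintype α] [Fintype β]
    [Nonempty α] [Nonempty β] (G : SimpleGraph α) (H : SimpleGraph β) :
    (G □ H).chromaticNumber = max G.chromaticNumber H.chromaticNumber := by
  have hGc := G.colorable_chromaticNumber_of_fintype
  have hHc := H.colorable_chromaticNumber_of_fintype
  have hGt : G.chromaticNumber ≠ ⊤ := by
    rw [chromaticNumber_ne_top_iff_exists]; exact ⟨_, hGc⟩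
  have hHt : H.chromaticNumber ≠ ⊤ := by
    rw [chromaticNumber_ne_top_iff_exists]; exact ⟨_, hHc⟩
  set n : ℕ := max G.chromaticNumber.toNat H.chromaticNumber.toNat with hn
  have hmax : (n : ℕ∞) = max G.chromaticNumber H.chromaticNumber := by
    simp only [hn]
    rw [show ((max G.chromaticNumber.toNat H.chromaticNumber.toNat : ℕ) : ℕ∞) = max (G.chromaticNumber.toNat : ℕ∞) (H.chromaticNumber.toNat : ℕ∞) from Nat.mono_cast.map_max, ENat.coe_toNat hGt, ENat.coe_toNat hHt]
  have hpos : 0 < n := by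
    have := G.chromaticNumber_pos hGc
    have h0 : 0 < G.chromaticNumber.toNat := by
      rw [Nat.pos_iff_ne_zero, Ne, ENat.toNat_eq_zero]
      push_neg
      exact ⟨this.ne', hGt⟩
    exact lt_of_lt_of_le h0 (le_max_left _ _)
  have : NeZero n := ⟨hpos.ne'⟩
  apply le_antisymm
  · rw [← hmax]
    exact (boxProd_colorable_aux G H (hGc.mono (le_max_left _ _))
      (hHc.mono (le_max_right _ _))).chromaticNumber_le
  · apply max_le
    · exact chromaticNumber_mono_of_hom (G.boxProdLeft H (Classical.arbitrary β)).toHom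
    · exact chromaticNumber_mono_of_hom (G.boxProdRight H (Classical.arbitrary α)).toHom
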